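/- Let G be a simple graph admitting a strong integer additive set-indexer f, and let v be a vertex of G of degree 2 whose two neighbours u and w are non-adjacent in G. Let G' be the graph obtained from G by deleting the vertex v and adding the edge uw (an elementary topological reduction). Then the restriction of f to the vertices of G' satisfies the strong condition |f(u') + f(v')| = |f(u')| · |f(v')| on every edge u'v' of G' if and only if the difference sets D_{f(u)} and D_{f(w)} are disjoint, where D_A denotes the set of positive differences between elements of A. -/
import Mathlib


open Pointwise

/-- The difference set of a finite set `A` of non-negative integers:
the set of positive differences `a - a'` with `a, a' ∈ A`, `a > a'`. -/
def diffSet (A : Finset ℕ) : Finset ℕ :=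
  ((A ×ˢ A).filter fun p => p.2 < p.1).image fun p => p.1 - p.2

/-- `f` is an integer additive set-indexer (IASI) of the simple graph `G`:
`f` is injective, assigns nonempty finite sets of non-negative integers to vertices,
and the induced edge function `f⁺(uv) = f(u) + f(v)` is injective on edges. -/
def IsIASI {V : Type*} (G : SimpleGraph V) (f : V → Finset ℕ) : Prop :=
  Function.Injective f ∧ (∀ v, (f v).Nonempty) ∧
    ∀ ⦃u v u' v' : V⦄, G.Adj u v → G.Adj u' v' →
      f u + f v = f u' + f v' → s(u, v) = s(u', v')

/-- A strong IASI: `|f⁺(uv)| = |f(u)| * |f(v)|` for all edges `uv`. -/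
def IsStrongIASI {V : Type*} (G : SimpleGraph V) (f : V → Finset ℕ) : Prop :=
  IsIASI G f ∧ ∀ ⦃u v : V⦄, G.Adj u v → (f u + f v).card = (f u).card * (f v).card

/-- A strongly `k`-uniform IASI: `|f⁺(uv)| = |f(u)| * |f(v)| = k` for all edges `uv`. -/
def IsStronglyUniformIASI {V : Type*} (G : SimpleGraph V) (f : V → Finset ℕ) (k : ℕ) : Prop :=
  IsStrongIASI G f ∧ ∀ ⦃u v : V⦄, G.Adj u v → (f u + f v).card = k

/-- A weakly `k`-uniform IASI: `|f⁺(uv)| = max(|f(u)|, |f(v)|) = k` for all edges `uv`. -/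
def IsWeaklyUniformIASI {V : Type*} (G : SimpleGraph V) (f : V → Finset ℕ) (k : ℕ) : Prop :=
  IsIASI G f ∧ ∀ ⦃u v : V⦄, G.Adj u v →
    (f u + f v).card = max (f u).card (f v).card ∧ (f u + f v).card = k
lemma mem_diffSet {A : Finset ℕ} {d : ℕ} :
    d ∈ diffSet A ↔ ∃ a ∈ A, ∃ a' ∈ A, a' < a ∧ a - a' = d := by
  simp [diffSet]
  tauto

lemma card_add_eq_iff (A B : Finset ℕ) :
    (A + B).card = A.card * B.card ↔ Disjoint (diffSet A) (diffSet B) := by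
  rw [← Finset.image_add_product, ← Finset.card_product, Finset.card_image_iff]
  constructor
  · intro hinj
    rw [Finset.disjoint_left]
    intro d hdA hdB
    obtain ⟨a, ha, a', ha', hlt, hsub⟩ := mem_diffSet.1 hdA
    obtain ⟨b, hb, b', hb', hlt', hsub'⟩ := mem_diffSet.1 hdB
    have heq : a + b' = a' + b := by omega
    have := hinj (by simp [Finset.mem_coe, ha, hb'] : ((a, b') : ℕ × ℕ) ∈ ↑(A ×ˢ B))
      (by simp [ha', hb] : ((a', b) : ℕ × ℕ) ∈ ↑(A ×ˢ B)) heq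
    simp at this
    omega
  · intro hd p hp q hq heq
    simp only [Finset.coe_product, Set.mem_prod, Finset.mem_coe] at hp hq
    simp only at heq
    rcases lt_trichotomy p.1 q.1 with h | h | h
    · exfalso
      have h1 : q.1 - p.1 ∈ diffSet A := mem_diffSet.2 ⟨q.1, hq.1, p.1, hp.1, h, rfl⟩
      have h2 : q.1 - p.1 ∈ diffSet B := mem_diffSet.2 ⟨p.2, hp.2, q.2, hq.2, by omega, by omega⟩
      exact Finset.disjoint_left.1 hd h1 h2
    · have : p.2 = q.2 := by omega
      exact Prod.ext h this
    · exfalso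
      have h1 : p.1 - q.1 ∈ diffSet A := mem_diffSet.2 ⟨p.1, hp.1, q.1, hq.1, h, rfl⟩
      have h2 : p.1 - q.1 ∈ diffSet B := mem_diffSet.2 ⟨q.2, hq.2, p.2, hp.2, by omega, by omega⟩
      exact Finset.disjoint_left.1 hd h1 h2

/-- Let `f` be a strong IASI of `G`, and let `v` be a vertex of degree 2 whose
two neighbours `u`, `w` are non-adjacent.  Let `G'` be obtained from `G` by deleting `v`
and adding the edge `uw` (an elementary topological reduction).  Then the restriction of
`f` to the vertices of `G'` satisfies the strong condition on every edge of `G'` iff the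
difference sets `D_{f(u)}` and `D_{f(w)}` are disjoint. -/
theorem topologicalReduction_strong_iff_disjoint_diffSets {V : Type*} (G : SimpleGraph V)
    (f : V → Finset ℕ) (hf : IsStrongIASI G f) (v u w : V) (huw : u ≠ w)
    (hnbr : G.neighborSet v = {u, w}) (hnadj : ¬ G.Adj u w) :
    (∀ a b : ({x : V | x ≠ v} : Set V),
        ((G ⊔ SimpleGraph.fromEdgeSet {s(u, w)}).induce {x : V | x ≠ v}).Adj a b →
          (f ↑a + f ↑b).card = (f ↑a).card * (f ↑b).card) ↔
      Disjoint (diffSet (f u)) (diffSet (f w)) := by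
  classical
  have hu_adj : G.Adj v u := by
    rw [← SimpleGraph.mem_neighborSet, hnbr]; left; rfl
  have hw_adj : G.Adj v w := by
    rw [← SimpleGraph.mem_neighborSet, hnbr]; right; rfl
  have hu_ne : u ≠ v := fun h => G.irrefl (h ▸ hu_adj)
  have hw_ne : w ≠ v := fun h => G.irrefl (h ▸ hw_adj)
  constructor
  · intro h
    have hadj : ((G ⊔ SimpleGraph.fromEdgeSet {s(u, w)}).induce {x : V | x ≠ v}).Adj
        ⟨u, hu_ne⟩ ⟨w, hw_ne⟩ := by
      simp [SimpleGraph.comap_adj, SimpleGraph.fromEdgeSet_adj, huw]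
    have := h ⟨u, hu_ne⟩ ⟨w, hw_ne⟩ hadj
    exact (card_add_eq_iff (f u) (f w)).1 this
  · intro hd a b hab
    rw [SimpleGraph.comap_adj, SimpleGraph.sup_adj] at hab
    rcases hab with hG | hE
    · exact hf.2 hG
    · rw [SimpleGraph.fromEdgeSet_adj] at hE
      have := hE.1
      simp only [Set.mem_singleton_iff, Sym2.eq, Sym2.rel_iff', Prod.mk.injEq,
        Prod.swap_prod_mk] at this
      simp only [Function.Embedding.coe_subtype] at this
      rcases this with ⟨h1, h2⟩ | ⟨h1, h2⟩
      · rw [show (↑a : V) = u from h1, show (↑b : V) = w from h2]; exact (card_add_eq_iff (f u) (f w)).2 hd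
      · rw [show (↑a : V) = w from h1, show (↑b : V) = u from h2, add_comm, mul_comm]
        exact (card_add_eq_iff (f u) (f w)).2 hd
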